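/- (Exact recovery via atomic ℓ₀ minimization) Suppose Y° = Σ_{j=1}^K c_j a(f_j) φ_j with distinct f_j ∈ [0,1), c_j > 0, ‖φ_j‖₂ = 1, and suppose K < (spark(𝒜_Ω) − 1 + rank(Y°_Ω))/2, where Y°_Ω denotes the rows of Y° indexed by Ω. Then Y° is the unique minimizer of ‖Y‖_{𝒜,0} subject to Y_Ω = Y°_Ω, and the atomic decomposition of Y° achieving ‖Y°‖_{𝒜,0} = K is unique. -/

import Mathlib

open Matrix Finset

open scoped Classical

/-- The atom `a(f)φ ∈ ℂ^{N×L}`. -/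
noncomputable def atom (N L : ℕ) (f : ℝ) (φ : Fin L → ℂ) : Matrix (Fin N) (Fin L) ℂ :=
  Matrix.of fun (i : Fin N) (l : Fin L) =>
    Complex.exp (2 * Real.pi * Complex.I * ((i : ℕ) : ℂ) * (f : ℂ)) * φ l

/-- The restricted steering vector `a_Ω(f)`. -/
noncomputable def aOmega {N : ℕ} (Ω : Finset (Fin N)) (f : ℝ) : Ω → ℂ :=
  fun j => Complex.exp (2 * Real.pi * Complex.I * (((j : Fin N) : ℕ) : ℂ) * (f : ℂ))

noncomputable def av (N : ℕ) (x : ℝ) : Fin N → ℂ :=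
  fun i => Complex.exp (2 * Real.pi * Complex.I * ((i : ℕ) : ℂ) * (x : ℂ))

lemma atom_apply (N L : ℕ) (x : ℝ) (φ : Fin L → ℂ) (i : Fin N) (l : Fin L) :
    atom N L x φ i l = av N x i * φ l := rfl

lemma aOmega_eq {N : ℕ} (Ω : Finset (Fin N)) (x : ℝ) (j : Ω) :
    aOmega Ω x j = av N x (j : Fin N) := rfl

noncomputable def coefFn {K L : ℕ} (c : Fin K → ℝ) (f : Fin K → ℝ) (φ : Fin K → Fin L → ℂ)
    (x : ℝ) : Fin L → ℂ :=
  ∑ k ∈ Finset.univ.filter (fun k => f k = x), (c k : ℂ) • φ k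

lemma coefFn_eq_zero {K L : ℕ} (c : Fin K → ℝ) (f : Fin K → ℝ) (φ : Fin K → Fin L → ℂ)
    (x : ℝ) (hx : x ∉ Finset.univ.image f) : coefFn c f φ x = 0 := by
  have : Finset.univ.filter (fun k => f k = x) = ∅ := by
    ext k
    simp only [mem_filter, mem_univ, true_and, notMem_empty, iff_false]
    intro h
    exact hx (Finset.mem_image.2 ⟨k, Finset.mem_univ k, h⟩)
  rw [coefFn, this, Finset.sum_empty]

lemma coefFn_of_injective {K L : ℕ} (c : Fin K → ℝ) (f : Fin K → ℝ) (φ : Fin K → Fin L → ℂ)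
    (hf : Function.Injective f) (k : Fin K) : coefFn c f φ (f k) = (c k : ℂ) • φ k := by
  have : Finset.univ.filter (fun j => f j = f k) = {k} := by
    ext j
    simp only [mem_filter, mem_univ, true_and, mem_singleton]
    exact ⟨fun h => hf h, fun h => by rw [h]⟩
  rw [coefFn, this, Finset.sum_singleton]

/-- Representation of a decomposition as a sum over distinct frequencies. -/
lemma rep {N L K' : ℕ} (c' : Fin K' → ℝ) (f' : Fin K' → ℝ) (φ' : Fin K' → Fin L → ℂ)
    (E : Finset ℝ) (hE : ∀ k, f' k ∈ E) (i : Fin N) (l : Fin L) :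
    (∑ k, (c' k : ℂ) • atom N L (f' k) (φ' k)) i l
      = ∑ x ∈ E, av N x i * coefFn c' f' φ' x l := by
  have step : ∀ x ∈ E, av N x i * coefFn c' f' φ' x l
      = ∑ k ∈ Finset.univ.filter (fun k => f' k = x),
          (c' k : ℂ) * (av N (f' k) i * φ' k l) := by
    intro x _
    rw [coefFn, Finset.sum_apply, Finset.mul_sum]
    refine Finset.sum_congr rfl fun k hk => ?_
    have hfk : f' k = x := (Finset.mem_filter.1 hk).2
    rw [hfk]
    simp [Pi.smul_apply, smul_eq_mul]
    ring
  rw [Finset.sum_congr rfl step,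
    Finset.sum_fiberwise_of_maps_to (fun k _ => hE k)
      (fun k => (c' k : ℂ) * (av N (f' k) i * φ' k l))]
  rw [Matrix.sum_apply]
  refine Finset.sum_congr rfl fun k _ => ?_
  rw [Matrix.smul_apply, atom_apply, smul_eq_mul]

lemma matrix_rank_add_le {m n : Type*} [Fintype m] [Fintype n] (A B : Matrix m n ℂ) :
    (A + B).rank ≤ A.rank + B.rank := by
  rw [Matrix.rank, Matrix.rank, Matrix.rank, Matrix.mulVecLin_add]
  have hle : LinearMap.range (A.mulVecLin + B.mulVecLin)
      ≤ LinearMap.range A.mulVecLin ⊔ LinearMap.range B.mulVecLin := by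
    rintro _ ⟨x, rfl⟩
    exact Submodule.add_mem_sup ⟨x, rfl⟩ ⟨x, rfl⟩
  exact (Submodule.finrank_mono hle).trans
    (Submodule.finrank_add_le_finrank_add_finrank _ _)

lemma rank_comp_le {m m' n : Type*} [Fintype m] [Fintype m'] [Fintype n]
    (e : m → m') (B : Matrix m' n ℂ) :
    Matrix.rank (Matrix.of fun i j => B (e i) j) ≤ B.rank := by
  have h : (Matrix.of fun i j => B (e i) j)
      = (Matrix.of fun i x => if e i = x then (1 : ℂ) else 0) * B := by
    ext i j
    simp [Matrix.mul_apply, ite_mul, Finset.sum_ite_eq]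
  rw [h]
  exact Matrix.rank_mul_le_right _ _

lemma rank_le_card_support {m n : Type*} [Fintype m] [Fintype n] (B : Matrix m n ℂ)
    (s : Finset m) (h : ∀ i ∉ s, B i = 0) : B.rank ≤ s.card := by
  have hB : B = (Matrix.of fun i (y : {a // a ∈ s}) => if (y : m) = i then (1 : ℂ) else 0)
      * (Matrix.of fun (y : {a // a ∈ s}) j => B (y : m) j) := by
    ext i j
    symm
    rw [Matrix.mul_apply]
    simp only [Matrix.of_apply]
    have hterm : ∀ y : {a // a ∈ s},
        (if ((y : m) = i) then (1:ℂ) else 0) * B (y : m) j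
          = (fun z => if z = i then B z j else 0) (y : m) := by
      intro y
      by_cases hy : (y : m) = i <;> simp [hy]
    rw [Finset.sum_congr rfl fun y _ => hterm y,
      Finset.sum_coe_sort s (fun z => if z = i then B z j else 0),
      Finset.sum_ite_eq' s i (fun z => B z j)]
    split_ifs with hi
    · rfl
    · exact (congrFun (h i hi) j).symm
  calc B.rank ≤ (Matrix.of fun (y : {a // a ∈ s}) j => B (y : m) j).rank := by
        conv_lhs => rw [hB]
        exact Matrix.rank_mul_le_right _ _
    _ ≤ Fintype.card {a // a ∈ s} := Matrix.rank_le_card_height _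
    _ = s.card := Fintype.card_coe s

lemma rank_pos_of_ne_zero {m n : Type*} [Fintype m] [Fintype n] (B : Matrix m n ℂ)
    (h : B ≠ 0) : 1 ≤ B.rank := by
  rw [Nat.one_le_iff_ne_zero]
  intro h0
  apply h
  have hbot : LinearMap.range B.mulVecLin = ⊥ := Submodule.finrank_eq_zero.1 h0
  ext i j
  have hmem : B.mulVec (Pi.single j 1) ∈ LinearMap.range B.mulVecLin :=
    ⟨Pi.single j 1, rfl⟩
  rw [hbot, Submodule.mem_bot] at hmem
  simpa [Matrix.mulVec_single] using congrFun hmem i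

/-- The spark of the continuous dictionary `{a_Ω(f) : f ∈ [0,1)}`. -/
noncomputable def spark {N : ℕ} (Ω : Finset (Fin N)) : ℕ :=
  sInf {r : ℕ | ∃ f : Fin r → ℝ, (∀ k, f k ∈ Set.Ico (0 : ℝ) 1) ∧
    Function.Injective f ∧ ¬ LinearIndependent ℂ (fun k => aOmega Ω (f k))}

lemma exists_low_support {m n : Type*} [Fintype m] [Fintype n] (Z : Matrix m n ℂ)
    (hZ : Z ≠ 0) :
    ∃ v : m → ℂ, (∃ x, Z.mulVec x = v) ∧ v ≠ 0 ∧
      (Finset.univ.filter (fun i => v i ≠ 0)).card + Z.rank ≤ Fintype.card m + 1 := by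
  set ρ := Z.rank with hρ
  have hρ1 : 1 ≤ ρ := rank_pos_of_ne_zero Z hZ
  have hρm : ρ ≤ Fintype.card m := Matrix.rank_le_card_height Z
  obtain ⟨S, -, hS⟩ := Finset.exists_subset_card_eq
    (show ρ - 1 ≤ (Finset.univ : Finset m).card by simpa using Nat.le_trans (Nat.sub_le ρ 1) hρm)
  set V := LinearMap.range Z.mulVecLin with hV
  have hfr : Module.finrank ℂ V = ρ := rfl
  let π : (m → ℂ) →ₗ[ℂ] ({a // a ∈ S} → ℂ) := LinearMap.funLeft ℂ ℂ (fun y => (y : m))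
  have hni : ¬ Function.Injective (π.comp V.subtype) := by
    intro hinj
    have := LinearMap.finrank_le_finrank_of_injective hinj
    rw [hfr] at this
    have hcard : Module.finrank ℂ ({a // a ∈ S} → ℂ) = S.card := by
      rw [Module.finrank_pi, Fintype.card_coe]
    rw [hcard, hS] at this
    omega
  rw [← LinearMap.ker_eq_bot] at hni
  obtain ⟨w, hwker, hw0⟩ := Submodule.ne_bot_iff _ |>.1 hni
  refine ⟨(w : m → ℂ), ?_, ?_, ?_⟩
  · obtain ⟨x, hx⟩ := w.2
    exact ⟨x, hx⟩
  · simpa using hw0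
  · have hvan : ∀ y : {a // a ∈ S}, (w : m → ℂ) (y : m) = 0 := by
      intro y
      have := congrFun (LinearMap.mem_ker.1 hwker) y
      exact this
    have hdisj : Disjoint (Finset.univ.filter (fun i => (w : m → ℂ) i ≠ 0)) S := by
      rw [Finset.disjoint_left]
      intro a ha haS
      exact (Finset.mem_filter.1 ha).2 (hvan ⟨a, haS⟩)
    have := Finset.card_le_univ
      ((Finset.univ.filter (fun i => (w : m → ℂ) i ≠ 0)) ∪ S)
    rw [Finset.card_union_of_disjoint hdisj, hS] at this
    omega

lemma spark_le_of_dep {N : ℕ} (Ω : Finset (Fin N)) (T : Finset ℝ)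
    (hT : ∀ x ∈ T, x ∈ Set.Ico (0:ℝ) 1) (v : {a // a ∈ T} → ℂ) (hv : v ≠ 0)
    (hnull : ∀ j : Ω, ∑ x : {a // a ∈ T}, v x * aOmega Ω (x : ℝ) j = 0) :
    spark Ω ≤ (Finset.univ.filter (fun x => v x ≠ 0)).card := by
  set sv := Finset.univ.filter (fun x => v x ≠ 0) with hsv
  set s := sv.card with hs
  let e : {a // a ∈ sv} ≃ Fin s := sv.equivFin
  let h : Fin s → ℝ := fun k => (((e.symm k : {a // a ∈ sv}) : {a // a ∈ T}) : ℝ)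
  have hIco : ∀ k, h k ∈ Set.Ico (0:ℝ) 1 := fun k => hT _ (((e.symm k : {a // a ∈ sv}) : {a // a ∈ T})).2
  have hinj : Function.Injective h := by
    intro k₁ k₂ hk
    have : (e.symm k₁ : {a // a ∈ sv}) = e.symm k₂ :=
      Subtype.ext (Subtype.ext hk)
    exact e.symm.injective this
  have hdep : ¬ LinearIndependent ℂ (fun k => aOmega Ω (h k)) := by
    rw [Fintype.not_linearIndependent_iff]
    refine ⟨fun k => v ((e.symm k : {a // a ∈ sv}) : {a // a ∈ T}), ?_, ?_⟩
    · have htot : ∑ x : {a // a ∈ T}, v x • aOmega Ω (x : ℝ) = 0 := by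
        funext j
        rw [Finset.sum_apply]
        simp only [Pi.smul_apply, smul_eq_mul, Pi.zero_apply]
        exact hnull j
      have h1 : ∑ y : {a // a ∈ sv}, v ((y : {a // a ∈ T})) •
            aOmega Ω (((y : {a // a ∈ T})) : ℝ)
          = ∑ x ∈ sv, v x • aOmega Ω (x : ℝ) :=
        Finset.sum_coe_sort sv (fun x => v x • aOmega Ω (x : ℝ))
      have h2 : ∑ x ∈ sv, v x • aOmega Ω (x : ℝ)
          = ∑ x : {a // a ∈ T}, v x • aOmega Ω (x : ℝ) := by
        refine Finset.sum_subset (Finset.subset_univ sv) ?_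
        intro x _ hx
        have : v x = 0 := by
          by_contra hvx
          exact hx (Finset.mem_filter.2 ⟨Finset.mem_univ x, hvx⟩)
        rw [this, zero_smul]
      have h3 : ∑ k : Fin s, v ((e.symm k : {a // a ∈ sv}) : {a // a ∈ T}) •
            aOmega Ω (h k)
          = ∑ y : {a // a ∈ sv}, v ((y : {a // a ∈ T})) •
            aOmega Ω (((y : {a // a ∈ T})) : ℝ) := by
        refine (Fintype.sum_equiv e (fun y => v ((y : {a // a ∈ T})) •
            aOmega Ω (((y : {a // a ∈ T})) : ℝ)) _ ?_).symm
        intro y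
        simp [h, Equiv.symm_apply_apply]
      rw [h3, h1, h2, htot]
    · obtain ⟨x, hx⟩ : ∃ x, v x ≠ 0 := by
        by_contra hall
        push_neg at hall
        exact hv (funext hall)
      have hxsv : x ∈ sv := Finset.mem_filter.2 ⟨Finset.mem_univ x, hx⟩
      refine ⟨e ⟨x, hxsv⟩, ?_⟩
      simpa using hx
  exact Nat.sInf_le ⟨h, hIco, hinj, hdep⟩

lemma main_key {N L : ℕ} (Ω : Finset (Fin N)) (K r : ℕ)
    (Cf Cg : ℝ → Fin L → ℂ) (F Γ : Finset ℝ)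
    (hFsupp : ∀ x, x ∉ F → Cf x = 0) (hGsupp : ∀ x, x ∉ Γ → Cg x = 0)
    (hFI : ∀ x ∈ F, x ∈ Set.Ico (0:ℝ) 1) (hΓI : ∀ x ∈ Γ, x ∈ Set.Ico (0:ℝ) 1)
    (hFc : F.card ≤ K) (hΓc : Γ.card ≤ K)
    (hr : r ≤ (Matrix.of fun (j : Ω) (l : Fin L) =>
        ∑ x ∈ Γ, aOmega Ω x j * Cg x l).rank)
    (hzero : ∀ (j : Ω) (l : Fin L), ∑ x ∈ F ∪ Γ, aOmega Ω x j * (Cg x l - Cf x l) = 0)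
    (hK : 2 * K + 1 < spark Ω + r) :
    ∀ x, Cg x = Cf x := by
  set T := F ∪ Γ with hT
  set Zm : Matrix {a // a ∈ T} (Fin L) ℂ :=
    Matrix.of (fun x l => Cg (x : ℝ) l - Cf (x : ℝ) l) with hZm
  suffices hZ0 : Zm = 0 by
    intro x
    by_cases hxT : x ∈ T
    · funext l
      have := congrFun (congrFun hZ0 ⟨x, hxT⟩) l
      simpa [Zm, sub_eq_zero] using this
    · rw [hGsupp x (fun h => hxT (Finset.mem_union_right F h)),
        hFsupp x (fun h => hxT (Finset.mem_union_left Γ h))]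
  by_contra hZne
  -- rank chain : r ≤ Zm.rank + (F ∩ Γ).card
  set Gt : Matrix {a // a ∈ T} (Fin L) ℂ := Matrix.of (fun x l => Cg (x : ℝ) l) with hGt
  have hrG : r ≤ Gt.rank := by
    have hΓT : ∀ y : {a // a ∈ Γ}, (y : ℝ) ∈ T := fun y =>
      Finset.mem_union_right F y.2
    have hfact : (Matrix.of fun (j : Ω) (l : Fin L) => ∑ x ∈ Γ, aOmega Ω x j * Cg x l)
        = (Matrix.of fun (j : Ω) (y : {a // a ∈ Γ}) => aOmega Ω (y : ℝ) j)
          * (Matrix.of fun (y : {a // a ∈ Γ}) l => Cg (y : ℝ) l) := by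
      ext j l
      rw [Matrix.mul_apply]
      simp only [Matrix.of_apply]
      exact (Finset.sum_coe_sort Γ (fun x => aOmega Ω x j * Cg x l)).symm
    have h1 : r ≤ (Matrix.of fun (y : {a // a ∈ Γ}) l => Cg (y : ℝ) l).rank := by
      refine hr.trans ?_
      rw [hfact]
      exact Matrix.rank_mul_le_right _ _
    have h2 : (Matrix.of fun (y : {a // a ∈ Γ}) l => Cg (y : ℝ) l)
        = Matrix.of fun (y : {a // a ∈ Γ}) l => Gt ⟨(y : ℝ), hΓT y⟩ l := rfl
    refine h1.trans ?_
    rw [h2]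
    exact rank_comp_le (fun (y : {a // a ∈ Γ}) => (⟨(y : ℝ), hΓT y⟩ : {a // a ∈ T})) Gt
  have hGt_le : Gt.rank ≤ Zm.rank + (F ∩ Γ).card := by
    set G1 : Matrix {a // a ∈ T} (Fin L) ℂ :=
      Matrix.of (fun x l => if (x : ℝ) ∈ F then 0 else Cg (x : ℝ) l) with hG1
    set G2 : Matrix {a // a ∈ T} (Fin L) ℂ :=
      Matrix.of (fun x l => if (x : ℝ) ∈ F then Cg (x : ℝ) l else 0) with hG2
    have hsplit : Gt = G1 + G2 := by
      ext x l
      simp only [Gt, G1, G2, Matrix.of_apply, Matrix.add_apply]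
      split_ifs <;> ring
    have hG1rank : G1.rank ≤ Zm.rank := by
      have hfac : G1 = (Matrix.of fun (x y : {a // a ∈ T}) =>
          if x = y then (if (x : ℝ) ∈ F then (0:ℂ) else 1) else 0) * Zm := by
        ext x l
        rw [Matrix.mul_apply]
        simp only [G1, Zm, Matrix.of_apply, ite_mul, zero_mul, one_mul]
        rw [Finset.sum_ite_eq Finset.univ x
          (fun y => if ((x : ℝ)) ∈ F then (0:ℂ) else Cg (y : ℝ) l - Cf (y : ℝ) l)]
        simp only [Finset.mem_univ, if_true]
        split_ifs with hxF
        · rfl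
        · rw [hFsupp (x : ℝ) hxF]
          simp
      rw [hfac]
      exact Matrix.rank_mul_le_right _ _
    have hG2rank : G2.rank ≤ (F ∩ Γ).card := by
      have hsupp : ∀ x : {a // a ∈ T},
          x ∉ Finset.univ.filter (fun x : {a // a ∈ T} => (x : ℝ) ∈ F ∧ (x : ℝ) ∈ Γ) →
          G2 x = 0 := by
        intro x hx
        funext l
        simp only [G2, Matrix.of_apply, Pi.zero_apply]
        split_ifs with hxF
        · have hxΓ : (x : ℝ) ∉ Γ := by
            intro hxΓ
            exact hx (Finset.mem_filter.2 ⟨Finset.mem_univ x, hxF, hxΓ⟩)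
          simpa using congrFun (hGsupp (x : ℝ) hxΓ) l
        · rfl
      refine (rank_le_card_support G2 _ hsupp).trans ?_
      refine Finset.card_le_card_of_injOn (fun x => (x : ℝ)) ?_ ?_
      · intro x hx
        rcases Finset.mem_filter.1 hx with ⟨-, h1, h2⟩
        exact Finset.mem_inter.2 ⟨h1, h2⟩
      · intro x _ y _ hxy
        exact Subtype.ext hxy
    calc Gt.rank = (G1 + G2).rank := by rw [hsplit]
      _ ≤ G1.rank + G2.rank := matrix_rank_add_le G1 G2
      _ ≤ Zm.rank + (F ∩ Γ).card := add_le_add hG1rank hG2rank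
  -- null space relation
  set A : Matrix {a // a ∈ Ω} {a // a ∈ T} ℂ :=
    Matrix.of (fun j x => aOmega Ω (x : ℝ) j) with hA
  have hAZ : A * Zm = 0 := by
    ext j l
    rw [Matrix.mul_apply]
    simp only [A, Zm, Matrix.of_apply, Matrix.zero_apply]
    rw [Finset.sum_coe_sort T (fun x => aOmega Ω x j * (Cg x l - Cf x l))]
    exact hzero j l
  obtain ⟨v, ⟨xv, hxv⟩, hv0, hvcard⟩ := exists_low_support Zm hZne
  have hnull : ∀ j : {a // a ∈ Ω}, ∑ x : {a // a ∈ T}, v x * aOmega Ω (x : ℝ) j = 0 := by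
    intro j
    have h4 : A.mulVec v = 0 := by
      rw [← hxv, Matrix.mulVec_mulVec, hAZ, Matrix.zero_mulVec]
    have h5 := congrFun h4 j
    rw [Matrix.mulVec, dotProduct] at h5
    simp only [A, Matrix.of_apply, Pi.zero_apply] at h5
    rw [← h5]
    exact Finset.sum_congr rfl fun x _ => mul_comm _ _
  have hTI : ∀ x ∈ T, x ∈ Set.Ico (0:ℝ) 1 := by
    intro x hx
    rcases Finset.mem_union.1 hx with h | h
    · exact hFI x h
    · exact hΓI x h
  have hsp := spark_le_of_dep Ω T hTI v hv0 hnull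
  have hcardT : (F ∪ Γ).card + (F ∩ Γ).card = F.card + Γ.card :=
    Finset.card_union_add_card_inter F Γ
  have hMcard : Fintype.card {a // a ∈ T} = T.card := Fintype.card_coe T
  rw [hMcard] at hvcard
  have hTcard : T.card + (F ∩ Γ).card = F.card + Γ.card := hcardT
  omega

noncomputable def zroot (N : ℕ) (k : Fin N) : ℂ :=
  Complex.exp (2 * Real.pi * Complex.I * ((((k : ℕ) : ℝ) / (N : ℝ) : ℝ) : ℂ))

lemma zroot_inj (N : ℕ) : Function.Injective (zroot N) := by
  intro a b hab
  rw [zroot, zroot, Complex.exp_eq_exp_iff_exists_int] at hab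
  obtain ⟨n, hn⟩ := hab
  have hNpos : 0 < N := a.pos
  have hN0 : ((N : ℕ) : ℂ) ≠ 0 := by exact_mod_cast hNpos.ne'
  have hpi : (2 * (Real.pi : ℂ) * Complex.I) ≠ 0 := by
    simp [Real.pi_ne_zero, Complex.I_ne_zero]
  push_cast at hn
  have h2 : ((a : ℕ) : ℂ) = ((b : ℕ) : ℂ) + n * N := by
    have hn' : 2 * (Real.pi : ℂ) * Complex.I * ((a : ℕ) : ℂ)
        = 2 * (Real.pi : ℂ) * Complex.I * (((b : ℕ) : ℂ) + n * N) := by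
      have := congrArg (fun t => t * (N : ℂ)) hn
      field_simp at this
      linear_combination (2 * (Real.pi : ℂ) * Complex.I) * this
    exact mul_left_cancel₀ hpi hn'
  have h3 : ((a : ℕ) : ℤ) = ((b : ℕ) : ℤ) + n * N := by exact_mod_cast h2
  have hNZ : (0 : ℤ) < N := by exact_mod_cast hNpos
  have ha : ((a : ℕ) : ℤ) < N := by exact_mod_cast a.isLt
  have hb : ((b : ℕ) : ℤ) < N := by exact_mod_cast b.isLt
  have ha0 : (0 : ℤ) ≤ ((a : ℕ) : ℤ) := by positivity
  have hb0 : (0 : ℤ) ≤ ((b : ℕ) : ℤ) := by positivity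
  have hn0 : n = 0 := by
    by_contra hne
    rcases lt_or_gt_of_ne hne with h' | h'
    · have h1 : n ≤ -1 := by omega
      have := mul_le_mul_of_nonneg_right h1 (le_of_lt hNZ)
      linarith
    · have h1 : (1 : ℤ) ≤ n := by omega
      have := mul_le_mul_of_nonneg_right h1 (le_of_lt hNZ)
      linarith
  rw [hn0] at h3
  simp only [zero_mul, add_zero] at h3
  have : (a : ℕ) = (b : ℕ) := by exact_mod_cast h3
  exact Fin.ext this

lemma av_eq_pow (N : ℕ) (k : Fin N) (i : Fin N) :
    av N (((k : ℕ) : ℝ) / (N : ℝ)) i = zroot N k ^ (i : ℕ) := by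
  rw [av, zroot, ← Complex.exp_nat_mul]
  congr 1
  ring


lemma decomp_nonempty (N L : ℕ) (Y : Matrix (Fin N) (Fin L) ℂ) :
    {K : ℕ | ∃ (c : Fin K → ℝ) (f : Fin K → ℝ) (φ : Fin K → Fin L → ℂ),
      (∀ k, 0 < c k) ∧ (∀ k, f k ∈ Set.Ico (0 : ℝ) 1) ∧
      (∀ k, ∑ l, ‖φ k l‖ ^ 2 = 1) ∧
      Y = ∑ k, (c k : ℂ) • atom N L (f k) (φ k)}.Nonempty := by
  set A : Matrix (Fin N) (Fin N) ℂ := (Matrix.vandermonde (zroot N))ᵀ with hA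
  have hdet : IsUnit A.det := by
    rw [isUnit_iff_ne_zero, hA, Matrix.det_transpose, Matrix.det_vandermonde]
    refine Finset.prod_ne_zero_iff.2 fun i _ => Finset.prod_ne_zero_iff.2 fun j hj => ?_
    refine sub_ne_zero.2 fun h => ?_
    have hji := zroot_inj N h
    rw [Finset.mem_Ioi] at hj
    exact absurd hji (ne_of_gt hj)
  set W := A⁻¹ * Y with hW
  have hYW : Y = A * W := by
    rw [hW, ← Matrix.mul_assoc, Matrix.mul_nonsing_inv A hdet, Matrix.one_mul]
  set nz := Finset.univ.filter (fun k : Fin N => W k ≠ 0) with hnz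
  set K₀ := nz.card with hK₀
  set e : {a // a ∈ nz} ≃ Fin K₀ := nz.equivFin with he
  have hrow : ∀ i : Fin K₀, W ((e.symm i : Fin N)) ≠ 0 := by
    intro i
    exact (Finset.mem_filter.1 (e.symm i).2).2
  have hspos : ∀ i : Fin K₀, 0 < ∑ l, ‖W ((e.symm i : Fin N)) l‖ ^ 2 := by
    intro i
    obtain ⟨l₀, hl₀⟩ := Function.ne_iff.1 (hrow i)
    refine Finset.sum_pos' (fun l _ => by positivity) ⟨l₀, Finset.mem_univ l₀, ?_⟩
    have hne : W ((e.symm i : Fin N)) l₀ ≠ 0 := by simpa using hl₀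
    exact pow_pos (norm_pos_iff.2 hne) 2
  have hApow : ∀ (i k : Fin N), A i k = av N (((k : ℕ) : ℝ) / (N : ℝ)) i := by
    intro i k
    rw [av_eq_pow]
    rfl
  refine ⟨K₀, fun i => Real.sqrt (∑ l, ‖W ((e.symm i : Fin N)) l‖ ^ 2),
    fun i => (((e.symm i : Fin N) : ℕ) : ℝ) / (N : ℝ),
    fun i l => W ((e.symm i : Fin N)) l /
      ((Real.sqrt (∑ l', ‖W ((e.symm i : Fin N)) l'‖ ^ 2) : ℝ) : ℂ), ?_, ?_, ?_, ?_⟩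
  · intro i
    exact Real.sqrt_pos.2 (hspos i)
  · intro i
    constructor
    · positivity
    · rw [div_lt_one (by exact_mod_cast (e.symm i : Fin N).pos)]
      exact_mod_cast (e.symm i : Fin N).isLt
  · intro i
    set s := ∑ l', ‖W ((e.symm i : Fin N)) l'‖ ^ 2 with hs
    have hs0 : 0 < s := hspos i
    have hnorm : ∀ l, ‖W ((e.symm i : Fin N)) l / ((Real.sqrt s : ℝ) : ℂ)‖ ^ 2
        = ‖W ((e.symm i : Fin N)) l‖ ^ 2 / s := by
      intro l
      rw [norm_div, Complex.norm_real, Real.norm_eq_abs,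
        _root_.abs_of_nonneg (Real.sqrt_nonneg s), div_pow, Real.sq_sqrt hs0.le]
    rw [Finset.sum_congr rfl (fun l _ => hnorm l), ← Finset.sum_div, ← hs,
      div_self hs0.ne']
  · ext i' l
    rw [Matrix.sum_apply]
    have hterm : ∀ i : Fin K₀,
        (((Real.sqrt (∑ l', ‖W ((e.symm i : Fin N)) l'‖ ^ 2) : ℝ) : ℂ) •
            atom N L ((((e.symm i : Fin N) : ℕ) : ℝ) / (N : ℝ))
              (fun l => W ((e.symm i : Fin N)) l /
                ((Real.sqrt (∑ l', ‖W ((e.symm i : Fin N)) l'‖ ^ 2) : ℝ) : ℂ))) i' l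
          = av N ((((e.symm i : Fin N) : ℕ) : ℝ) / (N : ℝ)) i' * W ((e.symm i : Fin N)) l := by
      intro i
      have hc0 : ((Real.sqrt (∑ l', ‖W ((e.symm i : Fin N)) l'‖ ^ 2) : ℝ) : ℂ) ≠ 0 := by
        exact_mod_cast (Real.sqrt_pos.2 (hspos i)).ne'
      rw [Matrix.smul_apply, atom_apply, smul_eq_mul]
      field_simp
    refine Eq.trans ?_ (Finset.sum_congr rfl fun i _ => (hterm i)).symm
    have hsum2 : ∑ i : Fin K₀,
        av N ((((e.symm i : Fin N) : ℕ) : ℝ) / (N : ℝ)) i' * W ((e.symm i : Fin N)) l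
        = ∑ y : {a // a ∈ nz},
            av N ((((y : Fin N) : ℕ) : ℝ) / (N : ℝ)) i' * W ((y : Fin N)) l := by
      refine (Fintype.sum_equiv e (fun y => av N ((((y : Fin N) : ℕ) : ℝ) / (N : ℝ)) i'
        * W ((y : Fin N)) l) _ ?_).symm
      intro y
      simp [Equiv.symm_apply_apply]
    rw [hsum2, Finset.sum_coe_sort nz
      (fun k => av N (((k : ℕ) : ℝ) / (N : ℝ)) i' * W k l)]
    have hsum3 : ∑ k ∈ nz, av N (((k : ℕ) : ℝ) / (N : ℝ)) i' * W k l
        = ∑ k : Fin N, av N (((k : ℕ) : ℝ) / (N : ℝ)) i' * W k l := by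
      refine Finset.sum_subset (Finset.subset_univ nz) ?_
      intro k _ hk
      have : W k = 0 := by
        by_contra hWk
        exact hk (Finset.mem_filter.2 ⟨Finset.mem_univ k, hWk⟩)
      rw [this]
      simp
    rw [hsum3]
    have := congrFun (congrFun hYW i') l
    rw [this, Matrix.mul_apply]
    exact Finset.sum_congr rfl fun k _ => by rw [hApow i' k]

/-- The atomic `ℓ₀` norm. -/
noncomputable def atomicL0 (N L : ℕ) (Y : Matrix (Fin N) (Fin L) ℂ) : ℕ :=
  sInf {K : ℕ | ∃ (c : Fin K → ℝ) (f : Fin K → ℝ) (φ : Fin K → Fin L → ℂ),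
    (∀ k, 0 < c k) ∧ (∀ k, f k ∈ Set.Ico (0 : ℝ) 1) ∧
    (∀ k, ∑ l, ‖φ k l‖ ^ 2 = 1) ∧
    Y = ∑ k, (c k : ℂ) • atom N L (f k) (φ k)}

lemma phi_ne_zero {L : ℕ} (φ : Fin L → ℂ) (h : ∑ l, ‖φ l‖ ^ 2 = 1) : φ ≠ 0 := by
  intro h0
  rw [h0] at h
  simp at h

lemma sum_norm_smul_sq {L : ℕ} (cc : ℝ) (hcc : 0 < cc) (φ : Fin L → ℂ)
    (h : ∑ l, ‖φ l‖ ^ 2 = 1) : ∑ l, ‖((cc : ℂ) • φ) l‖ ^ 2 = cc ^ 2 := by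
  have hl : ∀ l, ‖((cc : ℂ) • φ) l‖ ^ 2 = cc ^ 2 * ‖φ l‖ ^ 2 := by
    intro l
    rw [Pi.smul_apply, norm_smul, Complex.norm_real, Real.norm_eq_abs,
      _root_.abs_of_pos hcc, mul_pow]
  rw [Finset.sum_congr rfl fun l _ => hl l, ← Finset.mul_sum, h, mul_one]

theorem stmt11 (N L K : ℕ) (Ω : Finset (Fin N))
    (c : Fin K → ℝ) (f : Fin K → ℝ) (φ : Fin K → Fin L → ℂ)
    (hc : ∀ k, 0 < c k) (hf : ∀ k, f k ∈ Set.Ico (0 : ℝ) 1)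
    (hinj : Function.Injective f) (hφ : ∀ k, ∑ l, ‖φ k l‖ ^ 2 = 1)
    (Y₀ : Matrix (Fin N) (Fin L) ℂ)
    (hY₀ : Y₀ = ∑ k, (c k : ℂ) • atom N L (f k) (φ k))
    (hK : 2 * K + 1 < spark Ω + (Matrix.of fun (i : Ω) (l : Fin L) => Y₀ i l).rank) :
    (∀ Y : Matrix (Fin N) (Fin L) ℂ, (∀ i ∈ Ω, ∀ l, Y i l = Y₀ i l) →
      atomicL0 N L Y ≤ atomicL0 N L Y₀ → Y = Y₀) ∧
    atomicL0 N L Y₀ = K ∧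
    (∀ (c' : Fin K → ℝ) (f' : Fin K → ℝ) (φ' : Fin K → Fin L → ℂ),
      (∀ k, 0 < c' k) → (∀ k, f' k ∈ Set.Ico (0 : ℝ) 1) → Function.Injective f' →
      (∀ k, ∑ l, ‖φ' k l‖ ^ 2 = 1) →
      Y₀ = ∑ k, (c' k : ℂ) • atom N L (f' k) (φ' k) →
      ∃ σ : Equiv.Perm (Fin K), ∀ k, c' k = c (σ k) ∧ f' k = f (σ k) ∧ φ' k = φ (σ k)) := by
  classical
  set F : Finset ℝ := Finset.univ.image f with hF
  have hFc : F.card ≤ K := by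
    refine (Finset.card_image_le).trans ?_
    simp
  have hFI : ∀ x ∈ F, x ∈ Set.Ico (0:ℝ) 1 := by
    intro x hx
    obtain ⟨k, -, rfl⟩ := Finset.mem_image.1 hx
    exact hf k
  have hFsupp : ∀ x, x ∉ F → coefFn c f φ x = 0 := fun x hx =>
    coefFn_eq_zero c f φ x hx
  have hCfne : ∀ k, coefFn c f φ (f k) ≠ 0 := by
    intro k
    rw [coefFn_of_injective c f φ hinj k]
    exact smul_ne_zero (by exact_mod_cast (hc k).ne') (phi_ne_zero (φ k) (hφ k))
  -- the main engine
  have ENGINE : ∀ (Y : Matrix (Fin N) (Fin L) ℂ), (∀ i ∈ Ω, ∀ l, Y i l = Y₀ i l) →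
      ∀ (K' : ℕ) (c' : Fin K' → ℝ) (f' : Fin K' → ℝ) (φ' : Fin K' → Fin L → ℂ),
      (∀ k, 0 < c' k) → (∀ k, f' k ∈ Set.Ico (0:ℝ) 1) → K' ≤ K →
      Y = ∑ k, (c' k : ℂ) • atom N L (f' k) (φ' k) →
      ∀ x, coefFn c' f' φ' x = coefFn c f φ x := by
    intro Y hYfeas K' c' f' φ' hc' hf' hK' hYdec
    set Γ : Finset ℝ := Finset.univ.image f' with hΓ
    have hΓc : Γ.card ≤ K := by
      refine (Finset.card_image_le).trans ?_
      simpa using hK'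
    have hΓI : ∀ x ∈ Γ, x ∈ Set.Ico (0:ℝ) 1 := by
      intro x hx
      obtain ⟨k, -, rfl⟩ := Finset.mem_image.1 hx
      exact hf' k
    have hΓsupp : ∀ x, x ∉ Γ → coefFn c' f' φ' x = 0 := fun x hx =>
      coefFn_eq_zero c' f' φ' x hx
    have hmemΓ : ∀ k, f' k ∈ Γ := fun k => Finset.mem_image.2 ⟨k, Finset.mem_univ k, rfl⟩
    have hmemF : ∀ k, f k ∈ F := fun k => Finset.mem_image.2 ⟨k, Finset.mem_univ k, rfl⟩
    have ME : (Matrix.of fun (i : Ω) (l : Fin L) => Y₀ i l)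
        = Matrix.of fun (j : Ω) (l : Fin L) =>
            ∑ x ∈ Γ, aOmega Ω x j * coefFn c' f' φ' x l := by
      ext j l
      simp only [Matrix.of_apply, aOmega_eq]
      rw [← hYfeas (j : Fin N) j.2 l, hYdec]
      exact rep c' f' φ' Γ hmemΓ (j : Fin N) l
    have hr : (Matrix.of fun (i : Ω) (l : Fin L) => Y₀ i l).rank
        ≤ (Matrix.of fun (j : Ω) (l : Fin L) =>
            ∑ x ∈ Γ, aOmega Ω x j * coefFn c' f' φ' x l).rank :=
      le_of_eq (congrArg Matrix.rank ME)
    have hzero : ∀ (j : Ω) (l : Fin L),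
        ∑ x ∈ F ∪ Γ, aOmega Ω x j * (coefFn c' f' φ' x l - coefFn c f φ x l) = 0 := by
      intro j l
      have e1 : Y (j : Fin N) l = ∑ x ∈ F ∪ Γ, av N x (j : Fin N) * coefFn c' f' φ' x l := by
        rw [hYdec]
        exact rep c' f' φ' (F ∪ Γ) (fun k => Finset.mem_union_right F (hmemΓ k)) (j : Fin N) l
      have e2 : Y₀ (j : Fin N) l = ∑ x ∈ F ∪ Γ, av N x (j : Fin N) * coefFn c f φ x l := by
        rw [hY₀]
        exact rep c f φ (F ∪ Γ) (fun k => Finset.mem_union_left Γ (hmemF k)) (j : Fin N) l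
      simp only [aOmega_eq, mul_sub, Finset.sum_sub_distrib]
      rw [← e1, ← e2, hYfeas (j : Fin N) j.2 l, sub_self]
    exact main_key Ω K ((Matrix.of fun (i : Ω) (l : Fin L) => Y₀ i l).rank)
      (coefFn c f φ) (coefFn c' f' φ') F Γ hFsupp hΓsupp hFI hΓI hFc hΓc hr hzero hK
  -- Part 2 : atomicL0 Y₀ = K
  have hKmem : K ∈ {K' : ℕ | ∃ (c' : Fin K' → ℝ) (f' : Fin K' → ℝ) (φ' : Fin K' → Fin L → ℂ),
      (∀ k, 0 < c' k) ∧ (∀ k, f' k ∈ Set.Ico (0 : ℝ) 1) ∧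
      (∀ k, ∑ l, ‖φ' k l‖ ^ 2 = 1) ∧
      Y₀ = ∑ k, (c' k : ℂ) • atom N L (f' k) (φ' k)} := ⟨c, f, φ, hc, hf, hφ, hY₀⟩
  have hle : atomicL0 N L Y₀ ≤ K := Nat.sInf_le hKmem
  have hP2 : atomicL0 N L Y₀ = K := by
    refine le_antisymm hle ?_
    have hmem : ∃ (c' : Fin (atomicL0 N L Y₀) → ℝ) (f' : Fin (atomicL0 N L Y₀) → ℝ)
        (φ' : Fin (atomicL0 N L Y₀) → Fin L → ℂ),
        (∀ k, 0 < c' k) ∧ (∀ k, f' k ∈ Set.Ico (0 : ℝ) 1) ∧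
        (∀ k, ∑ l, ‖φ' k l‖ ^ 2 = 1) ∧
        Y₀ = ∑ k, (c' k : ℂ) • atom N L (f' k) (φ' k) :=
      Nat.sInf_mem (⟨K, hKmem⟩ : Set.Nonempty _)
    obtain ⟨c', f', φ', hc', hf', hφ', hdec⟩ := hmem
    have hCC := ENGINE Y₀ (fun i _ l => rfl) (atomicL0 N L Y₀) c' f' φ' hc' hf' hle hdec
    have hsub : F ⊆ Finset.univ.image f' := by
      intro x hx
      obtain ⟨k, -, rfl⟩ := Finset.mem_image.1 hx
      by_contra hxn
      exact hCfne k (by rw [← hCC (f k), coefFn_eq_zero c' f' φ' (f k) hxn])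
    calc K = F.card := by rw [hF, Finset.card_image_of_injective _ hinj]; simp
      _ ≤ (Finset.univ.image f').card := Finset.card_le_card hsub
      _ ≤ atomicL0 N L Y₀ := (Finset.card_image_le).trans (by simp)

  refine ⟨?_, hP2, ?_⟩
  -- Part 1
  · intro Y hYfeas hYle
    rw [hP2] at hYle
    have hne : {K' : ℕ | ∃ (c' : Fin K' → ℝ) (f' : Fin K' → ℝ) (φ' : Fin K' → Fin L → ℂ),
        (∀ k, 0 < c' k) ∧ (∀ k, f' k ∈ Set.Ico (0 : ℝ) 1) ∧
        (∀ k, ∑ l, ‖φ' k l‖ ^ 2 = 1) ∧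
        Y = ∑ k, (c' k : ℂ) • atom N L (f' k) (φ' k)}.Nonempty := decomp_nonempty N L Y
    have hmem : ∃ (c' : Fin (atomicL0 N L Y) → ℝ) (f' : Fin (atomicL0 N L Y) → ℝ)
        (φ' : Fin (atomicL0 N L Y) → Fin L → ℂ),
        (∀ k, 0 < c' k) ∧ (∀ k, f' k ∈ Set.Ico (0 : ℝ) 1) ∧
        (∀ k, ∑ l, ‖φ' k l‖ ^ 2 = 1) ∧
        Y = ∑ k, (c' k : ℂ) • atom N L (f' k) (φ' k) :=
      Nat.sInf_mem hne
    obtain ⟨c', f', φ', hc', hf', hφ', hdec⟩ := hmem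
    have hCC := ENGINE Y hYfeas (atomicL0 N L Y) c' f' φ' hc' hf' hYle hdec
    ext i l
    have hmemΓ : ∀ k, f' k ∈ F ∪ Finset.univ.image f' := fun k =>
      Finset.mem_union_right F (Finset.mem_image.2 ⟨k, Finset.mem_univ k, rfl⟩)
    have hmemF : ∀ k, f k ∈ F ∪ Finset.univ.image f' := fun k =>
      Finset.mem_union_left _ (Finset.mem_image.2 ⟨k, Finset.mem_univ k, rfl⟩)
    have e1 : Y i l = ∑ x ∈ F ∪ Finset.univ.image f',
        av N x i * coefFn c' f' φ' x l := by
      conv_lhs => rw [hdec]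
      exact rep c' f' φ' _ hmemΓ i l
    have e2 : Y₀ i l = ∑ x ∈ F ∪ Finset.univ.image f',
        av N x i * coefFn c f φ x l := by
      rw [hY₀]
      exact rep c f φ _ hmemF i l
    rw [e1, e2]
    exact Finset.sum_congr rfl fun x _ => by rw [hCC x]
  -- Part 3
  · intro c' f' φ' hc' hf' hinj' hφ' hdec
    have hCC := ENGINE Y₀ (fun i _ l => rfl) K c' f' φ' hc' hf' le_rfl hdec
    have hex : ∀ k : Fin K, ∃ j : Fin K, f j = f' k := by
      intro k
      have h1 : coefFn c' f' φ' (f' k) ≠ 0 := by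
        rw [coefFn_of_injective c' f' φ' hinj' k]
        exact smul_ne_zero (by exact_mod_cast (hc' k).ne') (phi_ne_zero (φ' k) (hφ' k))
      rw [hCC (f' k)] at h1
      by_contra hno
      push_neg at hno
      refine h1 (coefFn_eq_zero c f φ (f' k) ?_)
      intro hmem
      obtain ⟨j, -, hj⟩ := Finset.mem_image.1 hmem
      exact hno j hj
    set σ0 : Fin K → Fin K := fun k => (hex k).choose with hσ0def
    have hσ0 : ∀ k, f (σ0 k) = f' k := fun k => (hex k).choose_spec
    have hσinj : Function.Injective σ0 := by
      intro k1 k2 h12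
      apply hinj'
      rw [← hσ0 k1, ← hσ0 k2, h12]
    have hσbij : Function.Bijective σ0 := Finite.injective_iff_bijective.1 hσinj
    refine ⟨Equiv.ofBijective σ0 hσbij, ?_⟩
    intro k
    have hkey : (c' k : ℂ) • φ' k = (c (σ0 k) : ℂ) • φ (σ0 k) := by
      rw [← coefFn_of_injective c' f' φ' hinj' k, hCC (f' k), ← hσ0 k,
        coefFn_of_injective c f φ hinj (σ0 k)]
    have hcc : c' k = c (σ0 k) := by
      have h1 : ∑ l, ‖((c' k : ℂ) • φ' k) l‖ ^ 2 = (c' k) ^ 2 :=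
        sum_norm_smul_sq (c' k) (hc' k) (φ' k) (hφ' k)
      have h2 : ∑ l, ‖((c (σ0 k) : ℂ) • φ (σ0 k)) l‖ ^ 2 = (c (σ0 k)) ^ 2 :=
        sum_norm_smul_sq (c (σ0 k)) (hc (σ0 k)) (φ (σ0 k)) (hφ (σ0 k))
      rw [hkey] at h1
      have hsq : (c' k) ^ 2 = (c (σ0 k)) ^ 2 := by rw [← h1, h2]
      nlinarith [hc' k, hc (σ0 k)]
    have hφφ : φ' k = φ (σ0 k) := by
      have hne : ((c' k : ℝ) : ℂ) ≠ 0 := by exact_mod_cast (hc' k).ne'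
      apply smul_right_injective (Fin L → ℂ) hne
      show (c' k : ℂ) • φ' k = (c' k : ℂ) • φ (σ0 k)
      rw [hkey, hcc]
    exact ⟨hcc, (hσ0 k).symm, hφφ⟩
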